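/- Fix a real number x₀ > −1 and for x > x₀ define e₁(x) := ((1+x)/(x−x₀))·log((1+x)/(1+x₀)) − log( ((1+x)/(x−x₀))·log((1+x)/(1+x₀)) ) − 1. Then for every x > x₀ the two-sided bound − log((1+x)/(1+x₀)) ≤ e₁(x) ≤ (1+x)/(1+x₀) − 1 holds. -/

import Mathlib

/-- Two-sided bound on the hyperplane-approximation error:
`−log((1+x)/(1+x₀)) ≤ e₁(x) ≤ (1+x)/(1+x₀) − 1` for every `x > x₀ > −1`. -/
theorem approx_error_bounds (x₀ : ℝ) (hx₀ : -1 < x₀) (x : ℝ) (hx : x₀ < x) :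
    - Real.log ((1 + x) / (1 + x₀))
      ≤ ((1 + x) / (x - x₀)) * Real.log ((1 + x) / (1 + x₀))
          - Real.log (((1 + x) / (x - x₀)) * Real.log ((1 + x) / (1 + x₀))) - 1
    ∧ ((1 + x) / (x - x₀)) * Real.log ((1 + x) / (1 + x₀))
          - Real.log (((1 + x) / (x - x₀)) * Real.log ((1 + x) / (1 + x₀))) - 1
        ≤ (1 + x) / (1 + x₀) - 1 := by
  have h1 : (0:ℝ) < 1 + x₀ := by linarith
  have h2 : (0:ℝ) < 1 + x := by linarith
  have hd : (0:ℝ) < x - x₀ := by linarith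
  set r := (1 + x) / (1 + x₀) with hrdef
  have hrpos : 0 < r := div_pos h2 h1
  have hr1 : 1 ≤ r := (one_le_div h1).mpr (by linarith)
  have hlogr : 0 ≤ Real.log r := Real.log_nonneg hr1
  -- lower estimate on log r
  have hinv : r⁻¹ = (1 + x₀) / (1 + x) := by rw [hrdef, inv_div]
  have hlb : (x - x₀) / (1 + x) ≤ Real.log r := by
    have h := Real.log_le_sub_one_of_pos (inv_pos.mpr hrpos)
    rw [Real.log_inv, hinv] at h
    have heq : 1 - (1 + x₀) / (1 + x) = (x - x₀) / (1 + x) := by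
      field_simp; ring
    linarith [h, heq]
  -- upper estimate on log r
  have hub : Real.log r ≤ (x - x₀) / (1 + x₀) := by
    have h := Real.log_le_sub_one_of_pos hrpos
    have heq : r - 1 = (x - x₀) / (1 + x₀) := by
      rw [hrdef]; field_simp; ring
    linarith [h, heq]
  set t := ((1 + x) / (x - x₀)) * Real.log r with htdef
  have hcoef : 0 < (1 + x) / (x - x₀) := div_pos h2 hd
  have ht1 : 1 ≤ t := by
    have : (1 + x) / (x - x₀) * ((x - x₀) / (1 + x)) ≤ t :=
      mul_le_mul_of_nonneg_left hlb (le_of_lt hcoef)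
    have heq : (1 + x) / (x - x₀) * ((x - x₀) / (1 + x)) = 1 := by
      field_simp
    linarith [this, heq]
  have htr : t ≤ r := by
    have : t ≤ (1 + x) / (x - x₀) * ((x - x₀) / (1 + x₀)) :=
      mul_le_mul_of_nonneg_left hub (le_of_lt hcoef)
    have heq : (1 + x) / (x - x₀) * ((x - x₀) / (1 + x₀)) = r := by
      rw [hrdef]; field_simp
    linarith [this, heq]
  have hlogt0 : 0 ≤ Real.log t := Real.log_nonneg ht1
  have hlogt : Real.log t ≤ t - 1 := Real.log_le_sub_one_of_pos (by linarith)
  constructor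
  · linarith
  · linarith
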